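/- Let p be the characteristic of F. Every element of order p in G = GL₂(F) has a unique fixed point in ℙ¹(F); consequently, every subgroup of G that is cyclic modulo p is either cyclic or conjugate in G to a subgroup of B. -/

import Mathlib

open Matrix CategoryTheory CategoryTheory.Limits Pointwise
open scoped LinearAlgebra.Projectivization

noncomputable section

/-- The projective line over a field `K`, as the projectivization of `K²`. -/
abbrev P1 (K : Type*) [Field K] := ℙ K (Fin 2 → K)

namespace P1

variable {K : Type*} [Field K]

lemma mulVec_ne_zero (g : GL (Fin 2) K) {v : Fin 2 → K} (hv : v ≠ 0) :
    (g : Matrix (Fin 2) (Fin 2) K) *ᵥ v ≠ 0 := by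
  intro h
  apply hv
  have h2 := congrArg (fun w => ((g⁻¹ : GL (Fin 2) K) : Matrix (Fin 2) (Fin 2) K) *ᵥ w) h
  simp only [Matrix.mulVec_mulVec] at h2
  rw [Units.inv_mul, Matrix.one_mulVec, Matrix.mulVec_zero] at h2
  exact h2

/-- The natural action of `GL₂(K)` on the projective line `ℙ¹(K)`. -/
instance : SMul (GL (Fin 2) K) (P1 K) :=
  ⟨fun g x => Projectivization.mk K ((g : Matrix (Fin 2) (Fin 2) K) *ᵥ x.rep)
    (mulVec_ne_zero g x.rep_nonzero)⟩

lemma smul_mk (g : GL (Fin 2) K) (v : Fin 2 → K) (hv : v ≠ 0) :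
    g • Projectivization.mk K v hv
      = Projectivization.mk K ((g : Matrix (Fin 2) (Fin 2) K) *ᵥ v) (mulVec_ne_zero g hv) := by
  show Projectivization.mk K _ _ = _
  rw [Projectivization.mk_eq_mk_iff]
  obtain ⟨a, ha⟩ := Projectivization.exists_smul_eq_mk_rep K v hv
  exact ⟨a, by rw [← ha]; simp [Matrix.mulVec_smul]⟩

instance : MulAction (GL (Fin 2) K) (P1 K) where
  one_smul x := by
    induction x using Projectivization.ind with
    | h v hv => rw [smul_mk]; simp
  mul_smul g h x := by
    induction x using Projectivization.ind with
    | h v hv => rw [smul_mk, smul_mk, smul_mk]; simp only [Units.val_mul, Matrix.mulVec_mulVec]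

end P1

section Setup

variable (F : Type*) [Field F] (F' : Type*) [Field F'] [Algebra F F']

/-- The inclusion `GL₂(F) → GL₂(F')` induced by the inclusion `F ⊆ F'`. -/
def glMap : GL (Fin 2) F →* GL (Fin 2) F' :=
  Matrix.GeneralLinearGroup.map (algebraMap F F')

/-- The scalar matrices, as a homomorphism `Fˣ →* GL₂(F)`. -/
def scalarGL : Fˣ →* GL (Fin 2) F :=
  Units.map (Matrix.scalar (Fin 2)).toMonoidHom

variable {F F'}

/-- The (semilinear) action of a field automorphism `σ ∈ Gal(F'/F)` on `ℙ¹(F')`. -/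
def sigmaPt (σ : F' ≃ₐ[F] F') (x : P1 F') : P1 F' :=
  Projectivization.mk F' (fun i => σ (x.rep i))
    (fun h => x.rep_nonzero (funext fun i => σ.injective (by simpa using congrFun h i)))

variable (F F')

/-- The set of `F`-rational points `ℙ¹(F) ⊆ ℙ¹(F')`. -/
def ratPts : Set (P1 F') :=
  Set.range (fun x : P1 F =>
    Projectivization.mk F' (fun i => algebraMap F F' (x.rep i))
      (fun h => x.rep_nonzero (funext fun i =>
        (algebraMap F F').injective (by simpa using congrFun h i))))

/-- A Borel subgroup of `GL₂(F)`: the stabilizer of a point `∞ ∈ ℙ¹(F)`. -/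
def Bsub (xoo : P1 F) : Subgroup (GL (Fin 2) F) :=
  MulAction.stabilizer (GL (Fin 2) F) xoo

/-- A split maximal torus of `GL₂(F)`: the pointwise stabilizer of `{0, ∞} ⊆ ℙ¹(F)`. -/
def Tsub (x0 xoo : P1 F) : Subgroup (GL (Fin 2) F) :=
  MulAction.stabilizer (GL (Fin 2) F) x0 ⊓ MulAction.stabilizer (GL (Fin 2) F) xoo

/-- The setwise stabilizer of `{0, ∞} ⊆ ℙ¹(F)` in `GL₂(F)`. -/
def Nsub (x0 xoo : P1 F) : Subgroup (GL (Fin 2) F) :=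
  MulAction.stabilizer (GL (Fin 2) F) ({x0, xoo} : Set (P1 F))

/-- A nonsplit maximal torus of `GL₂(F)`: the stabilizer in `GL₂(F)` of a point
`P ∈ ℙ¹(F') ∖ ℙ¹(F)`. -/
def T'sub (P : P1 F') : Subgroup (GL (Fin 2) F) :=
  (MulAction.stabilizer (GL (Fin 2) F') P).comap (glMap F F')

/-- The setwise stabilizer in `GL₂(F)` of the pair `{P, σP}`, for `P ∈ ℙ¹(F') ∖ ℙ¹(F)`. -/
def N'sub (σ : F' ≃ₐ[F] F') (P : P1 F') : Subgroup (GL (Fin 2) F) :=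
  (MulAction.stabilizer (GL (Fin 2) F') ({P, sigmaPt σ P} : Set (P1 F'))).comap (glMap F F')

end Setup

/-- A finite group `H` is *cyclic modulo `l`* if it has a normal `l`-subgroup
whose quotient is cyclic. -/
def CyclicModulo (l : ℕ) (H : Type*) [Group H] : Prop :=
  ∃ Q : Subgroup H, ∃ hn : Q.Normal,
    IsPGroup l Q ∧ (letI := hn; IsCyclic (H ⧸ Q))

section Aux

variable {F : Type*} [Field F]

lemma ker_line {N : Matrix (Fin 2) (Fin 2) F} (hN : N ≠ 0) {v w : Fin 2 → F}
    (hv : v ≠ 0) (hw : w ≠ 0) (hNv : N *ᵥ v = 0) (hNw : N *ᵥ w = 0) :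
    Projectivization.mk F v hv = Projectivization.mk F w hw := by
  rw [Projectivization.mk_eq_mk_iff]
  by_contra hcon
  push_neg at hcon
  have hind : LinearIndependent F ![v, w] := by
    rw [linearIndependent_fin2]
    refine ⟨by simpa using hw, fun a ha => ?_⟩
    simp only [Matrix.cons_val_one, Matrix.head_cons, Matrix.cons_val_zero] at ha
    have ha0 : a ≠ 0 := by rintro rfl; simp at ha; exact hv ha.symm
    exact hcon (Units.mk0 a ha0) ha
  have hspan : Submodule.span F (Set.range ![v, w]) = ⊤ :=
    hind.span_eq_top_of_card_eq_finrank (by simp)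
  apply hN
  have hall : N.mulVecLin = 0 := by
    apply LinearMap.ext_on hspan
    rintro x ⟨i, rfl⟩
    fin_cases i <;> simpa using (by assumption : N *ᵥ _ = 0)
  ext i j
  have h2 := congrFun (LinearMap.congr_fun hall (Pi.single j 1) :) i
  simpa [Matrix.mulVec_single] using h2

lemma P1.mk_one_zero_ne : (![1, 0] : Fin 2 → F) ≠ 0 := by
  intro h; simpa using congrFun h 0

lemma P1.mk_a_one_ne (a : F) : (![a, 1] : Fin 2 → F) ≠ 0 := by
  intro h; simpa using congrFun h 1

/-- The affine chart: `ℙ¹(F)` is in bijection with `Option F`. -/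
lemma P1.card_eq [Fintype F] : Nat.card (P1 F) = Fintype.card F + 1 := by
  have hbij : Function.Bijective (fun o : Option F => o.elim
      (Projectivization.mk F ![1, 0] P1.mk_one_zero_ne)
      (fun a => Projectivization.mk F ![a, 1] (P1.mk_a_one_ne a))) := by
    constructor
    · rintro (_ | a) (_ | b) h <;>
        simp only [Option.elim, Projectivization.mk_eq_mk_iff] at h
      · rfl
      · obtain ⟨c, hc⟩ := h
        have := congrFun hc 1
        simp [Units.smul_def] at this
      · obtain ⟨c, hc⟩ := h
        have := congrFun hc 1
        simp [Units.smul_def] at this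
      · obtain ⟨c, hc⟩ := h
        have h1 := congrFun hc 1
        have h0 := congrFun hc 0
        simp [Units.smul_def] at h1 h0
        rw [h1] at h0
        simp at h0
        rw [h0]
    · intro x
      induction x using Projectivization.ind with
      | h v hv =>
        by_cases h1 : v 1 = 0
        · have h0 : v 0 ≠ 0 := by
            intro h0
            exact hv (funext fun i => by fin_cases i <;> assumption)
          refine ⟨none, ?_⟩
          simp only [Option.elim, Projectivization.mk_eq_mk_iff]
          exact ⟨(Units.mk0 (v 0) h0)⁻¹, funext fun i => by
            fin_cases i <;> simp [Units.smul_def, h1, inv_mul_cancel₀ h0]⟩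
        · refine ⟨some (v 0 / v 1), ?_⟩
          simp only [Option.elim, Projectivization.mk_eq_mk_iff]
          exact ⟨(Units.mk0 (v 1) h1)⁻¹, funext fun i => by
            fin_cases i <;>
              simp [Units.smul_def, div_eq_inv_mul, inv_mul_cancel₀ h1]⟩
  rw [← Nat.card_eq_of_bijective _ hbij]
  simp [Nat.card_eq_fintype_card]

lemma P1.char_not_dvd_card [Fintype F] : ¬ ringChar F ∣ Nat.card (P1 F) := by
  haveI := ringChar.charP F
  obtain ⟨n, hp, hcard⟩ := FiniteField.card F (ringChar F)
  rw [P1.card_eq, hcard]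
  intro hdvd
  have h1 : ringChar F ∣ ringChar F ^ (n : ℕ) := dvd_pow_self _ (by positivity)
  have h2 : ringChar F ∣ 1 := (Nat.dvd_add_right h1).mp hdvd
  exact hp.one_lt.ne' (Nat.dvd_one.mp h2)

lemma P1.exists_smul_eq' (x : P1 F) :
    ∃ g : GL (Fin 2) F, g • Projectivization.mk F ![1, 0] P1.mk_one_zero_ne = x := by
  induction x using Projectivization.ind with
  | h v hv =>
    have key : ∀ (M : Matrix (Fin 2) (Fin 2) F) (hM : M.det ≠ 0),
        (M 0 0 = v 0) → (M 1 0 = v 1) →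
        ∃ g : GL (Fin 2) F, g • Projectivization.mk F ![1, 0] P1.mk_one_zero_ne
          = Projectivization.mk F v hv := by
      intro M hM e0 e1
      refine ⟨Matrix.GeneralLinearGroup.mkOfDetNeZero M hM, ?_⟩
      have hcoe : ((Matrix.GeneralLinearGroup.mkOfDetNeZero M hM : GL (Fin 2) F) :
          Matrix (Fin 2) (Fin 2) F) = M := rfl
      rw [P1.smul_mk, Projectivization.mk_eq_mk_iff]
      refine ⟨1, funext fun i => ?_⟩
      fin_cases i <;>
        simp [hcoe, Matrix.mulVec, dotProduct, Matrix.vecHead, Fin.sum_univ_two, ← e0, ← e1]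
    by_cases h0 : v 0 = 0
    · have h1 : v 1 ≠ 0 := by
        intro h1; exact hv (funext fun i => by fin_cases i <;> assumption)
      exact key !![v 0, 1; v 1, 0] (by simp [Matrix.det_fin_two_of, h0, h1]) rfl rfl
    · exact key !![v 0, 0; v 1, 1] (by simp [Matrix.det_fin_two_of, h0]) rfl rfl

lemma P1.exists_smul_eq (x y : P1 F) : ∃ g : GL (Fin 2) F, g • x = y := by
  obtain ⟨g1, hg1⟩ := P1.exists_smul_eq' x
  obtain ⟨g2, hg2⟩ := P1.exists_smul_eq' y
  refine ⟨g2 * g1⁻¹, ?_⟩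
  rw [mul_smul, ← hg1, inv_smul_smul, hg2]

lemma pow_mulVec_eigen {A : Matrix (Fin 2) (Fin 2) F} {w : Fin 2 → F} {c : F}
    (h : A *ᵥ w = c • w) (n : ℕ) : (A ^ n) *ᵥ w = c ^ n • w := by
  induction n with
  | zero => simp
  | succ n ih =>
    rw [pow_succ, ← Matrix.mulVec_mulVec, h, Matrix.mulVec_smul, ih, smul_smul, pow_succ, mul_comm]

lemma order_char_unique_fixed {F : Type*} [Field F] [Fintype F] (g : GL (Fin 2) F)
    (hg : orderOf g = ringChar F) : ∃! x : P1 F, g • x = x := by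
  haveI := ringChar.charP F
  set p := ringChar F with hpdef
  have hp : p.Prime := CharP.char_is_prime F p
  haveI : Fact p.Prime := ⟨hp⟩
  set A : Matrix (Fin 2) (Fin 2) F := (g : Matrix (Fin 2) (Fin 2) F) with hAdef
  have hApow : A ^ p = 1 := by
    have h1 := pow_orderOf_eq_one g
    rw [hg] at h1
    have h2 := congrArg Units.val h1
    simpa [Units.val_pow_eq_pow_val] using h2
  have hNpow : (A - 1) ^ p = 0 := by
    rw [sub_pow_char_of_commute p (Commute.one_right A), hApow, one_pow, sub_self]
  have hN : A - 1 ≠ 0 := by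
    intro h
    have : A = 1 := sub_eq_zero.mp h
    have : g = 1 := Units.ext this
    rw [this, orderOf_one] at hg
    exact hp.one_lt.ne hg
  have hdet : (A - 1).det = 0 := by
    have : (A - 1).det ^ p = 0 := by rw [← Matrix.det_pow, hNpow]; simp
    exact pow_eq_zero_iff hp.ne_zero |>.mp this
  obtain ⟨v, hv0, hvN⟩ := (Matrix.exists_mulVec_eq_zero_iff).mpr hdet
  have hAv : A *ᵥ v = v := by
    have := hvN
    rwa [Matrix.sub_mulVec, Matrix.one_mulVec, sub_eq_zero] at this
  refine ⟨Projectivization.mk F v hv0, ?_, ?_⟩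
  · show g • Projectivization.mk F v hv0 = Projectivization.mk F v hv0
    rw [P1.smul_mk]
    exact (Projectivization.mk_eq_mk_iff _ _ _ _ _).mpr ⟨1, by rw [one_smul]; exact hAv.symm⟩
  · intro y hy
    induction y using Projectivization.ind with
    | h w hw =>
      rw [P1.smul_mk, Projectivization.mk_eq_mk_iff] at hy
      obtain ⟨a, ha⟩ := hy
      have hap : (a : F) ^ p = 1 := by
        have h1 : A *ᵥ w = (a : F) • w := by rw [← ha, Units.smul_def]
        have h2 : (A ^ p) *ᵥ w = ((a : F) ^ p) • w := pow_mulVec_eigen h1 p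
        rw [hApow, Matrix.one_mulVec] at h2
        have h3 : (((a : F) ^ p) - 1) • w = 0 := by
          rw [sub_smul, one_smul, ← h2, sub_self]
        rcases smul_eq_zero.mp h3 with h | h
        · exact sub_eq_zero.mp h
        · exact absurd h hw
      have ha1 : (a : F) = 1 := by
        have : ((a : F) - 1) ^ p = 0 := by rw [sub_pow_char, hap, one_pow, sub_self]
        exact sub_eq_zero.mp (pow_eq_zero_iff hp.ne_zero |>.mp this)
      have hNw : (A - 1) *ᵥ w = 0 := by
        rw [Matrix.sub_mulVec, Matrix.one_mulVec, ← ha, Units.smul_def, ha1, one_smul, sub_self]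
      exact ker_line hN hw hv0 hNw hvN

end Aux


/-- Every element of order `p = char F` in `G = GL₂(F)` has a unique fixed
point in `ℙ¹(F)`; consequently, every subgroup of `G` that is cyclic modulo `p` is either
cyclic or conjugate in `G` to a subgroup of `B`. -/
theorem statement17 {F : Type*} [Field F] [Fintype F] (xoo : P1 F) :
    (∀ g : GL (Fin 2) F, orderOf g = ringChar F → ∃! x : P1 F, g • x = x) ∧
    (∀ H : Subgroup (GL (Fin 2) F), CyclicModulo (ringChar F) H →
      IsCyclic H ∨ ∃ g : GL (Fin 2) F, H.map (MulAut.conj g).toMonoidHom ≤ Bsub F xoo) := by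
  haveI := ringChar.charP F
  have hp : (ringChar F).Prime := CharP.char_is_prime F (ringChar F)
  haveI hfp : Fact (ringChar F).Prime := ⟨hp⟩
  refine ⟨fun g hg => order_char_unique_fixed g hg, ?_⟩
  intro H hHc
  obtain ⟨Q, hn, hQp, hcyc⟩ := hHc
  haveI := hn
  by_cases hQb : Q = ⊥
  · left
    subst hQb
    exact isCyclic_of_surjective (QuotientGroup.quotientBot (G := ↥H))
      (QuotientGroup.quotientBot (G := ↥H)).surjective
  · right
    obtain ⟨u, huQ, hu1⟩ := Q.bot_or_exists_ne_one.resolve_left hQb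
    obtain ⟨k, hk⟩ := hQp ⟨u, huQ⟩
    have hu_pow : u ^ (ringChar F ^ k) = 1 := by
      have := congrArg (Subtype.val) hk
      simpa using this
    have hord_dvd : orderOf u ∣ ringChar F ^ k := orderOf_dvd_of_pow_eq_one hu_pow
    have hord_ne : orderOf u ≠ 1 := fun h => hu1 (orderOf_eq_one_iff.mp h)
    have hpord : ringChar F ∣ orderOf u := by
      rcases (Nat.dvd_prime_pow hp).mp hord_dvd with ⟨m, _, hordm⟩
      rcases m with _ | m
      · exact absurd (by simpa using hordm) hord_ne
      · rw [hordm]; exact dvd_pow_self _ (Nat.succ_ne_zero m)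
    set y : ↥H := u ^ (orderOf u / ringChar F) with hydef
    have hyQ : y ∈ Q := Q.pow_mem huQ _
    have hyord : orderOf y = ringChar F :=
      orderOf_pow_orderOf_div (orderOf_pos u).ne' hpord
    set yg : GL (Fin 2) F := (y : GL (Fin 2) F) with hygdef
    have hygord : orderOf yg = ringChar F :=
      (orderOf_injective H.subtype Subtype.coe_injective y).trans hyord
    obtain ⟨x, hx, hxuniq⟩ := order_char_unique_fixed yg hygord
    obtain ⟨z, hz⟩ :=
      hQp.nonempty_fixed_point_of_prime_not_dvd_card (P1 F) P1.char_not_dvd_card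
    have hzfix : ∀ q : ↥H, q ∈ Q → (q : GL (Fin 2) F) • z = z := by
      intro q hq
      exact (MulAction.mem_fixedPoints.mp hz) ⟨q, hq⟩
    have hzx : z = x := hxuniq z (hzfix y hyQ)
    have hfixH : ∀ h : ↥H, (h : GL (Fin 2) F) • x = x := by
      intro h
      set c : ↥H := h * y * h⁻¹ with hcdef
      have hcQ : c ∈ Q := hn.conj_mem y hyQ h
      have hcord : orderOf ((c : ↥H) : GL (Fin 2) F) = ringChar F := by
        have h1 : ((c : ↥H) : GL (Fin 2) F)
            = (MulAut.conj (h : GL (Fin 2) F)) yg := rfl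
        rw [h1,
          show (MulAut.conj (h : GL (Fin 2) F)) yg
            = (MulAut.conj (h : GL (Fin 2) F)).toMonoidHom yg from rfl,
          orderOf_injective (MulAut.conj (h : GL (Fin 2) F)).toMonoidHom
            (MulAut.conj (h : GL (Fin 2) F)).injective, hygord]
      obtain ⟨w, hw, hwuniq⟩ := order_char_unique_fixed _ hcord
      have hcx : ((c : ↥H) : GL (Fin 2) F) • x = x := by
        rw [← hzx]; exact hzfix c hcQ
      have hchx : ((c : ↥H) : GL (Fin 2) F) • ((h : GL (Fin 2) F) • x)
          = (h : GL (Fin 2) F) • x := by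
        have h1 : ((c : ↥H) : GL (Fin 2) F)
            = (h : GL (Fin 2) F) * yg * (h : GL (Fin 2) F)⁻¹ := rfl
        rw [h1, mul_smul, mul_smul, inv_smul_smul, hx]
      exact (hwuniq _ hchx).trans (hwuniq _ hcx).symm
    obtain ⟨g, hg⟩ := P1.exists_smul_eq x xoo
    refine ⟨g, ?_⟩
    rintro k hk
    simp only [Subgroup.mem_map] at hk
    obtain ⟨h, hhH, rfl⟩ := hk
    show (MulAut.conj g).toMonoidHom h ∈ MulAction.stabilizer (GL (Fin 2) F) xoo
    rw [MulAction.mem_stabilizer_iff]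
    have h1 : (MulAut.conj g).toMonoidHom h = g * h * g⁻¹ := rfl
    rw [h1, mul_smul, mul_smul, ← hg, inv_smul_smul,
      hfixH ⟨h, hhH⟩, hg]

end
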